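/- Among all monic polynomials of degree n, the polynomial 2^n (n!)² P_n(x) / (2n)! uniquely minimizes the L² norm on [-1,1], where P_n is the Legendre polynomial, and its squared L² norm is (2^n (n!)²/(2n)!)² · 2/(2n+1). -/

import Mathlib

open MeasureTheory Polynomial intervalIntegral

/-- The degree-`n` Legendre polynomial, via Rodrigues' formula. -/
noncomputable def legendre (n : ℕ) : Polynomial ℝ :=
  Polynomial.C (1 / (2 ^ n * (n.factorial : ℝ))) *
    Polynomial.derivative^[n] ((Polynomial.X ^ 2 - 1) ^ n)

noncomputable def Pint (p : Polynomial ℝ) : ℝ := ∫ x in (-1 : ℝ)..1, p.eval x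

lemma pcont (p : Polynomial ℝ) : IntervalIntegrable (fun x => p.eval x) volume (-1) 1 :=
  (p.continuous_aeval).intervalIntegrable _ _

lemma Pint_add (p q : Polynomial ℝ) : Pint (p + q) = Pint p + Pint q := by
  simp only [Pint, eval_add]
  exact intervalIntegral.integral_add (pcont p) (pcont q)

lemma Pint_C_mul (c : ℝ) (p : Polynomial ℝ) : Pint (Polynomial.C c * p) = c * Pint p := by
  simp only [Pint, eval_mul, eval_C]
  exact intervalIntegral.integral_const_mul c _

lemma Pint_derivative (p : Polynomial ℝ) :
    Pint (derivative p) = p.eval 1 - p.eval (-1) := by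
  refine intervalIntegral.integral_eq_sub_of_hasDerivAt (fun x _ => p.hasDerivAt x) (pcont _)

lemma Pint_ibp (a b : Polynomial ℝ) :
    Pint (derivative a * b) =
      (a * b).eval 1 - (a * b).eval (-1) - Pint (a * derivative b) := by
  have h := Pint_derivative (a * b)
  rw [derivative_mul, Pint_add] at h
  linarith

lemma exists_dvd (n : ℕ) : ∀ k ≤ n, ∃ q : Polynomial ℝ,
    derivative^[k] ((X ^ 2 - 1) ^ n) = (X ^ 2 - 1) ^ (n - k) * q := by
  intro k
  induction k with
  | zero => exact fun _ => ⟨1, by simp⟩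
  | succ k ih =>
    intro hk
    obtain ⟨q, hq⟩ := ih (Nat.le_of_succ_le hk)
    obtain ⟨m, hm⟩ : ∃ m, n - k = m + 1 := ⟨n - (k+1), by omega⟩
    refine ⟨Polynomial.C ((m : ℝ) + 1) * (2 * X) * q + (X ^ 2 - 1) * derivative q, ?_⟩
    rw [Function.iterate_succ_apply', hq, hm]
    have h2 : n - (k + 1) = m := by omega
    rw [h2, derivative_mul, derivative_pow]
    have hC2 : (Polynomial.C (2:ℝ)) = 2 := by
      rw [show (2:ℝ) = ((2:ℕ):ℝ) by norm_num, Polynomial.C_eq_natCast]; norm_num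
    have h3 : derivative ((X:Polynomial ℝ) ^ 2 - 1) = 2 * X := by
      simp [derivative_X_pow, hC2, one_add_one_eq_two]
    rw [h3]
    push_cast
    ring

lemma eval_iterate_deriv_zero (n k : ℕ) (hk : k < n) (x : ℝ) (hx : x ^ 2 - 1 = 0) :
    (derivative^[k] ((X ^ 2 - 1) ^ n)).eval x = 0 := by
  obtain ⟨q, hq⟩ := exists_dvd n k hk.le
  obtain ⟨m, hm⟩ : ∃ m, n - k = m + 1 := ⟨n - (k+1), by omega⟩
  rw [hq, hm]
  simp [hx]

lemma key_ibp (n : ℕ) : ∀ k, k ≤ n → ∀ q : Polynomial ℝ,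
    Pint (derivative^[k] ((X ^ 2 - 1) ^ n) * q) =
      (-1 : ℝ) ^ k * Pint ((X ^ 2 - 1) ^ n * derivative^[k] q) := by
  intro k
  induction k with
  | zero => intro _ q; simp
  | succ k ih =>
    intro hk q
    have hkn : k < n := hk
    rw [Function.iterate_succ_apply', Pint_ibp]
    have e1 : (derivative^[k] ((X ^ 2 - 1) ^ n) * q).eval 1 = 0 := by
      rw [eval_mul, eval_iterate_deriv_zero n k hkn 1 (by norm_num)]; ring
    have e2 : (derivative^[k] ((X ^ 2 - 1) ^ n) * q).eval (-1) = 0 := by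
      rw [eval_mul, eval_iterate_deriv_zero n k hkn (-1) (by norm_num)]; ring
    rw [e1, e2, ih hkn.le (derivative q), ← Function.iterate_succ_apply derivative k q]
    ring

lemma Pint_sub (p q : Polynomial ℝ) : Pint (p - q) = Pint p - Pint q := by
  simp only [Pint, eval_sub]
  exact intervalIntegral.integral_sub (pcont p) (pcont q)

lemma orth (n : ℕ) (q : Polynomial ℝ) (hq : q.natDegree < n) :
    Pint (derivative^[n] ((X ^ 2 - 1) ^ n) * q) = 0 := by
  rw [key_ibp n n le_rfl q, Polynomial.iterate_derivative_eq_zero hq]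
  simp [Pint]

lemma g_monic (n : ℕ) : (((X:Polynomial ℝ) ^ 2 - 1) ^ n).Monic := by
  have : ((X:Polynomial ℝ) ^ 2 - 1) = X ^ 2 - Polynomial.C 1 := by simp
  rw [this]
  exact (monic_X_pow_sub_C 1 two_ne_zero).pow n

lemma g_natDegree (n : ℕ) : (((X:Polynomial ℝ) ^ 2 - 1) ^ n).natDegree = 2 * n := by
  have h : ((X:Polynomial ℝ) ^ 2 - 1) = X ^ 2 - Polynomial.C 1 := by simp
  have h1 : ((X:Polynomial ℝ) ^ 2 - 1).Monic := by
    rw [h]; exact monic_X_pow_sub_C 1 two_ne_zero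
  rw [(h1).natDegree_pow, h, natDegree_X_pow_sub_C]
  ring

lemma iter2n (n : ℕ) :
    derivative^[2 * n] (((X:Polynomial ℝ) ^ 2 - 1) ^ n) =
      Polynomial.C (((2 * n).factorial : ℝ)) := by
  ext m
  rw [Polynomial.coeff_iterate_derivative, coeff_C]
  rcases eq_or_ne m 0 with rfl | hm
  · have : (((X:Polynomial ℝ) ^ 2 - 1) ^ n).coeff (0 + 2 * n) = 1 := by
      rw [zero_add, ← g_natDegree n]
      exact (g_monic n).coeff_natDegree
    rw [this]
    simp [Nat.descFactorial_self]
  · have : (((X:Polynomial ℝ) ^ 2 - 1) ^ n).coeff (m + 2 * n) = 0 := by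
      apply coeff_eq_zero_of_natDegree_lt
      rw [g_natDegree n]; omega
    simp [this, hm]

lemma f_coeff (n : ℕ) :
    (derivative^[n] (((X:Polynomial ℝ) ^ 2 - 1) ^ n)).coeff n =
      ((2 * n).descFactorial n : ℝ) := by
  rw [Polynomial.coeff_iterate_derivative]
  have : (((X:Polynomial ℝ) ^ 2 - 1) ^ n).coeff (n + n) = 1 := by
    have h2 : n + n = 2 * n := by ring
    rw [h2, ← g_natDegree n]
    exact (g_monic n).coeff_natDegree
  rw [this]
  have h2 : n + n = 2 * n := by ring
  rw [h2]
  simp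

lemma f_natDegree_le (n : ℕ) :
    (derivative^[n] (((X:Polynomial ℝ) ^ 2 - 1) ^ n)).natDegree ≤ n := by
  have := Polynomial.natDegree_iterate_derivative (((X:Polynomial ℝ) ^ 2 - 1) ^ n) n
  rw [g_natDegree n] at this
  omega

lemma In_zero : Pint (((1:Polynomial ℝ) - X ^ 2) ^ 0) = 2 := by
  simp [Pint]
  norm_num

lemma In_succ (n : ℕ) :
    (2 * (n:ℝ) + 3) * Pint (((1:Polynomial ℝ) - X ^ 2) ^ (n + 1)) =
      2 * ((n:ℝ) + 1) * Pint (((1:Polynomial ℝ) - X ^ 2) ^ n) := by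
  have hC2 : (Polynomial.C (2:ℝ)) = 2 := by
    rw [show (2:ℝ) = ((2:ℕ):ℝ) by norm_num, Polynomial.C_eq_natCast]; norm_num
  have hid : derivative ((X:Polynomial ℝ) * ((1:Polynomial ℝ) - X ^ 2) ^ (n + 1)) =
      Polynomial.C (2 * (n:ℝ) + 3) * ((1:Polynomial ℝ) - X ^ 2) ^ (n + 1) -
        Polynomial.C (2 * ((n:ℝ) + 1)) * ((1:Polynomial ℝ) - X ^ 2) ^ n := by
    rw [derivative_mul, derivative_pow, derivative_X]
    have hd : derivative ((1:Polynomial ℝ) - X ^ 2) = -(2 * X) := by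
      simp [derivative_X_pow, hC2, one_add_one_eq_two]
    rw [hd]
    have hC3 : (Polynomial.C (3:ℝ)) = 3 := by
      rw [show (3:ℝ) = ((3:ℕ):ℝ) by norm_num, Polynomial.C_eq_natCast]; norm_num
    have hCadd : Polynomial.C (2 * (n:ℝ) + 3) = 2 * Polynomial.C (n:ℝ) + 3 := by
      rw [map_add, map_mul, hC2, hC3]
    have hCadd2 : Polynomial.C (2 * ((n:ℝ) + 1)) = 2 * Polynomial.C (n:ℝ) + 2 := by
      rw [show 2 * ((n:ℝ) + 1) = 2 * (n:ℝ) + 2 by ring, map_add, map_mul, hC2]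
    have hCn : Polynomial.C ((n:ℝ) + 1) = Polynomial.C (n:ℝ) + 1 := by
      rw [map_add]; norm_num
    push_cast
    rw [hCadd, hCadd2, hCn]
    ring
  have hP := Pint_derivative ((X:Polynomial ℝ) * ((1:Polynomial ℝ) - X ^ 2) ^ (n + 1))
  rw [hid, Pint_sub, Pint_C_mul, Pint_C_mul] at hP
  have e1 : ((X:Polynomial ℝ) * ((1:Polynomial ℝ) - X ^ 2) ^ (n + 1)).eval 1 = 0 := by
    simp
  have e2 : ((X:Polynomial ℝ) * ((1:Polynomial ℝ) - X ^ 2) ^ (n + 1)).eval (-1) = 0 := by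
    simp
  rw [e1, e2] at hP
  linarith

lemma In_val (n : ℕ) :
    Pint (((1:Polynomial ℝ) - X ^ 2) ^ n) =
      2 ^ (2 * n + 1) * (n.factorial : ℝ) ^ 2 / ((2 * n + 1).factorial : ℝ) := by
  induction n with
  | zero => simpa using In_zero
  | succ n ih =>
    have h := In_succ n
    rw [ih] at h
    have h3 : (0:ℝ) < 2 * (n:ℝ) + 3 := by positivity
    have hf1 : (0:ℝ) < ((2 * n + 1).factorial : ℝ) := by
      exact_mod_cast Nat.factorial_pos _
    have hf2 : ((2 * (n + 1) + 1).factorial : ℝ) =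
        (2 * (n:ℝ) + 3) * (2 * (n:ℝ) + 2) * ((2 * n + 1).factorial : ℝ) := by
      have : 2 * (n + 1) + 1 = (2 * n + 1) + 1 + 1 := by ring
      rw [this, Nat.factorial_succ, Nat.factorial_succ]
      push_cast
      ring
    have hfact : ((n + 1).factorial : ℝ) = ((n:ℝ) + 1) * (n.factorial : ℝ) := by
      rw [Nat.factorial_succ]; push_cast; ring
    have goal : Pint (((1:Polynomial ℝ) - X ^ 2) ^ (n + 1)) =
        2 ^ (2 * (n + 1) + 1) * ((n + 1).factorial : ℝ) ^ 2 / ((2 * (n + 1) + 1).factorial : ℝ) := by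
      rw [hf2, hfact]
      have h4 : Pint (((1:Polynomial ℝ) - X ^ 2) ^ (n + 1)) =
          2 * ((n:ℝ) + 1) * (2 ^ (2 * n + 1) * (n.factorial : ℝ) ^ 2 / ((2 * n + 1).factorial : ℝ))
            / (2 * (n:ℝ) + 3) := by
        field_simp at h ⊢
        linarith
      rw [h4]
      have hpow : (2:ℝ) ^ (2 * (n + 1) + 1) = 2 ^ (2 * n + 1) * 4 := by
        rw [show 2 * (n + 1) + 1 = (2 * n + 1) + 2 by ring, pow_add]; norm_num
      rw [hpow]
      field_simp
      ring
    exact goal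

lemma norm_f (n : ℕ) :
    Pint (derivative^[n] (((X:Polynomial ℝ) ^ 2 - 1) ^ n) *
        derivative^[n] (((X:Polynomial ℝ) ^ 2 - 1) ^ n)) =
      ((2 * n).factorial : ℝ) *
        (2 ^ (2 * n + 1) * (n.factorial : ℝ) ^ 2 / ((2 * n + 1).factorial : ℝ)) := by
  rw [key_ibp n n le_rfl]
  have h1 : derivative^[n] (derivative^[n] (((X:Polynomial ℝ) ^ 2 - 1) ^ n)) =
      derivative^[2 * n] (((X:Polynomial ℝ) ^ 2 - 1) ^ n) := by
    rw [← Function.iterate_add_apply]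
    congr 1
    ring
  rw [h1, iter2n, mul_comm (((X:Polynomial ℝ) ^ 2 - 1) ^ n), Pint_C_mul]
  have h2 : (((X:Polynomial ℝ) ^ 2 - 1) ^ n) =
      Polynomial.C ((-1:ℝ) ^ n) * ((1:Polynomial ℝ) - X ^ 2) ^ n := by
    rw [map_pow, ← mul_pow]
    congr 1
    rw [map_neg, map_one]
    ring
  rw [h2, Pint_C_mul, In_val]
  have : ((-1:ℝ) ^ n) * ((-1:ℝ) ^ n) = 1 := by
    rw [← pow_add, ← two_mul, pow_mul]
    norm_num
  linear_combination (((2 * n).factorial : ℝ) *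
    (2 ^ (2 * n + 1) * (n.factorial : ℝ) ^ 2 / ((2 * n + 1).factorial : ℝ))) * this

/-- Among monic polynomials of degree `n`, the normalized Legendre polynomial
`2ⁿ(n!)²/(2n)! · Pₙ` uniquely minimizes the `L²` norm on `[-1,1]`, and its squared `L²`
norm equals `(2ⁿ(n!)²/(2n)!)² · 2/(2n+1)`. -/
theorem legendre_minimal_L2_norm (n : ℕ) (hn : 1 ≤ n) :
    (∀ p : Polynomial ℝ, p.Monic → p.natDegree = n →
      (∫ x in (-1 : ℝ)..1,
          ((Polynomial.C ((2 : ℝ) ^ n * (n.factorial : ℝ) ^ 2 / ((2 * n).factorial : ℝ)) *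
            legendre n).eval x) ^ 2)
        ≤ ∫ x in (-1 : ℝ)..1, (p.eval x) ^ 2
      ∧ ((∫ x in (-1 : ℝ)..1, (p.eval x) ^ 2)
            = ∫ x in (-1 : ℝ)..1,
              ((Polynomial.C ((2 : ℝ) ^ n * (n.factorial : ℝ) ^ 2 / ((2 * n).factorial : ℝ)) *
                legendre n).eval x) ^ 2
          → p = Polynomial.C ((2 : ℝ) ^ n * (n.factorial : ℝ) ^ 2 / ((2 * n).factorial : ℝ)) *
                legendre n))
    ∧ (∫ x in (-1 : ℝ)..1,
          ((Polynomial.C ((2 : ℝ) ^ n * (n.factorial : ℝ) ^ 2 / ((2 * n).factorial : ℝ)) *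
            legendre n).eval x) ^ 2)
        = ((2 : ℝ) ^ n * (n.factorial : ℝ) ^ 2 / ((2 * n).factorial : ℝ)) ^ 2 *
            (2 / (2 * n + 1)) := by
  have hbridge : ∀ P : Polynomial ℝ,
      (∫ x in (-1 : ℝ)..1, (P.eval x) ^ 2) = Pint (P * P) := by
    intro P; simp [Pint, eval_mul, sq]
  set f := derivative^[n] (((X : Polynomial ℝ) ^ 2 - 1) ^ n) with hf
  set a : ℝ := (n.factorial : ℝ) / ((2 * n).factorial : ℝ) with ha
  set c : ℝ := (2 : ℝ) ^ n * (n.factorial : ℝ) ^ 2 / ((2 * n).factorial : ℝ) with hc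
  have hfacn : (0 : ℝ) < (n.factorial : ℝ) := by exact_mod_cast n.factorial_pos
  have hfac2n : (0 : ℝ) < ((2 * n).factorial : ℝ) := by exact_mod_cast (2 * n).factorial_pos
  have hL : Polynomial.C c * legendre n = Polynomial.C a * f := by
    simp only [legendre, ← hf]
    rw [← mul_assoc, ← map_mul]
    congr 2
    rw [hc, ha]
    field_simp
  have hC2 : (Polynomial.C (2 : ℝ)) = 2 := by
    rw [show (2 : ℝ) = ((2 : ℕ) : ℝ) by norm_num, Polynomial.C_eq_natCast]; norm_num
  have hmul : (n.factorial : ℝ) * ((2 * n).descFactorial n : ℝ) = ((2 * n).factorial : ℝ) := by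
    have h := Nat.factorial_mul_descFactorial (show n ≤ 2 * n by omega)
    have h2 : 2 * n - n = n := by omega
    rw [h2] at h
    exact_mod_cast h
  have hLcoeff : (Polynomial.C a * f).coeff n = 1 := by
    rw [coeff_C_mul, f_coeff n, ha]
    field_simp
    linarith [hmul]
  have hLdegle : (Polynomial.C a * f).natDegree ≤ n :=
    le_trans (natDegree_C_mul_le a f) (f_natDegree_le n)
  have hLmonic : (Polynomial.C a * f).Monic :=
    monic_of_natDegree_le_of_coeff_eq_one n hLdegle hLcoeff
  have hLnorm : Pint ((Polynomial.C a * f) * (Polynomial.C a * f)) =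
      c ^ 2 * (2 / (2 * (n : ℝ) + 1)) := by
    have h1 : (Polynomial.C a * f) * (Polynomial.C a * f) =
        Polynomial.C (a * a) * (f * f) := by rw [map_mul]; ring
    rw [h1, Pint_C_mul, norm_f n]
    have hfac : ((2 * n + 1).factorial : ℝ) = (2 * (n : ℝ) + 1) * ((2 * n).factorial : ℝ) := by
      rw [Nat.factorial_succ]; push_cast; ring
    have h2n1 : (0 : ℝ) < 2 * (n : ℝ) + 1 := by positivity
    have hpow : (2 : ℝ) ^ (2 * n + 1) = (2 : ℝ) ^ n * (2 : ℝ) ^ n * 2 := by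
      rw [show 2 * n + 1 = n + n + 1 by ring, pow_add, pow_add]; ring
    rw [ha, hc, hfac, hpow]
    field_simp
  constructor
  · intro p hp hpn
    set r := p - (Polynomial.C a * f) with hr
    have hrdeg : r.natDegree < n := by
      rcases eq_or_ne p (Polynomial.C a * f) with heq | hne
      · rw [hr, heq, sub_self, natDegree_zero]; omega
      · have hLdeg : (Polynomial.C a * f).natDegree = n := by
          refine le_antisymm hLdegle (le_natDegree_of_ne_zero ?_)
          rw [hLcoeff]; exact one_ne_zero
        have hdq : p.degree = (Polynomial.C a * f).degree := by
          rw [Polynomial.degree_eq_natDegree hp.ne_zero,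
              Polynomial.degree_eq_natDegree hLmonic.ne_zero, hpn, hLdeg]
        have hdeg : r.degree < (n : WithBot ℕ) := by
          have := Polynomial.degree_sub_lt hdq hp.ne_zero
            (by rw [hp.leadingCoeff, hLmonic.leadingCoeff])
          rwa [Polynomial.degree_eq_natDegree hp.ne_zero, hpn] at this
        exact (Polynomial.natDegree_lt_iff_degree_lt
          (sub_ne_zero.mpr hne)).mpr hdeg
    have hsplit : p * p = (Polynomial.C a * f) * (Polynomial.C a * f) +
        Polynomial.C 2 * ((Polynomial.C a * f) * r) + r * r := by
      rw [hC2, hr]; ring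
    have hPp : Pint (p * p) = Pint ((Polynomial.C a * f) * (Polynomial.C a * f)) +
        2 * Pint ((Polynomial.C a * f) * r) + Pint (r * r) := by
      rw [hsplit, Pint_add, Pint_add, Pint_C_mul]
    have horth : Pint ((Polynomial.C a * f) * r) = 0 := by
      rw [mul_assoc, Pint_C_mul, orth n r hrdeg, mul_zero]
    have hrnn : 0 ≤ Pint (r * r) := by
      apply intervalIntegral.integral_nonneg (by norm_num)
      intro x _
      rw [eval_mul]
      exact mul_self_nonneg _
    constructor
    · rw [hbridge, hbridge, hL, hPp, horth]
      linarith
    · intro heq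
      rw [hbridge, hbridge, hL, hPp, horth] at heq
      have hr0 : Pint (r * r) = 0 := by linarith
      by_contra hne
      have hne' : p ≠ Polynomial.C a * f := fun h => hne (by rw [hL]; exact h)
      have hrne : r ≠ 0 := sub_ne_zero.mpr hne'
      have hfin : Set.Finite {x : ℝ | r.IsRoot x} := r.finite_setOf_isRoot hrne
      have hinf : (Set.Icc (-1 : ℝ) 1).Infinite := Set.Icc_infinite (by norm_num)
      obtain ⟨x0, hx0⟩ := (hinf.diff hfin).nonempty
      have hpos : 0 < ∫ x in (-1 : ℝ)..1, (r.eval x) ^ 2 := by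
        apply intervalIntegral.integral_pos (by norm_num)
        · exact ((r.continuous).pow 2).continuousOn
        · exact fun x _ => sq_nonneg _
        · refine ⟨x0, hx0.1, ?_⟩
          have hx : r.eval x0 ≠ 0 := hx0.2
          positivity
      rw [hbridge r] at hpos
      linarith
  · rw [hbridge, hL, hLnorm]
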